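/- arXiv:2007.09406 — 3 statements merged into one kernel-verified Lean document; each statement's English description precedes it below -/
import Mathlib

section
/- Let r ∈ ℚ with r > 1, r ∉ ℕ, and for i ∈ ℕ let M_i := ⟨{r^{2k} : k ∈ ℕ₀} ∪ {r^{2j−1} : 1 ≤ j ≤ i}⟩. Then (M_i)_{i≥1} is an approximation of S_r = ⟨r^n : n ∈ ℕ₀⟩, and moreover n(r)² − d(r)² ∈ Δ(M_i) for every i ∈ ℕ. In particular, since Δ(S_r) = {n(r) − d(r)}, the inclusion Δ(S_r) ⊆ liminf_i Δ(M_i) can be strict. -/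
open scoped NNRat ENNReal

/-- The set of atoms of a Puiseux monoid (additive submonoid of `ℚ≥0`). -/
def PMatoms (M : AddSubmonoid ℚ≥0) : Set ℚ≥0 :=
  {a | a ∈ M ∧ a ≠ 0 ∧ ∀ y ∈ M, ∀ z ∈ M, y ≠ 0 → z ≠ 0 → a ≠ y + z}

/-- A Puiseux monoid is atomic if it is generated by its atoms. -/
def PMatomic (M : AddSubmonoid ℚ≥0) : Prop :=
  ∀ x ∈ M, x ∈ AddSubmonoid.closure (PMatoms M)

/-- The set of factorizations of `x` in `M`: multisets of atoms summing to `x`. -/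
def PMfactorizations (M : AddSubmonoid ℚ≥0) (x : ℚ≥0) : Set (Multiset ℚ≥0) :=
  {s | (∀ a ∈ s, a ∈ PMatoms M) ∧ s.sum = x}

/-- The set of lengths of `x` in `M`. -/
def PMlengths (M : AddSubmonoid ℚ≥0) (x : ℚ≥0) : Set ℕ :=
  Multiset.card '' PMfactorizations M x

/-- The elasticity of an element: `sup L(x) / inf L(x)` in `ℝ≥0∞`, `1` for `x = 0`. -/
noncomputable def PMelasticityOf (M : AddSubmonoid ℚ≥0) (x : ℚ≥0) : ℝ≥0∞ :=
  if x = 0 then 1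
  else sSup ((fun n : ℕ => (n : ℝ≥0∞)) '' PMlengths M x) /
       sInf ((fun n : ℕ => (n : ℝ≥0∞)) '' PMlengths M x)

/-- The elasticity of a Puiseux monoid. -/
noncomputable def PMelasticity (M : AddSubmonoid ℚ≥0) : ℝ≥0∞ :=
  ⨆ x ∈ M, PMelasticityOf M x

/-- The union of sets of lengths containing `n`. -/
def PMunionOfLengths (M : AddSubmonoid ℚ≥0) (n : ℕ) : Set ℕ :=
  {m | ∃ x : ℚ≥0, n ∈ PMlengths M x ∧ m ∈ PMlengths M x}

/-- The `n`-th local elasticity `ρ_n(M) = sup U_n(M)` in `ℝ≥0∞`. -/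
noncomputable def PMlocalElasticity (M : AddSubmonoid ℚ≥0) (n : ℕ) : ℝ≥0∞ :=
  sSup ((fun m : ℕ => (m : ℝ≥0∞)) '' PMunionOfLengths M n)

/-- The set of distances of an element `x` of `M`. -/
def PMdistances (M : AddSubmonoid ℚ≥0) (x : ℚ≥0) : Set ℕ :=
  {d | 0 < d ∧ ∃ l ∈ PMlengths M x,
    PMlengths M x ∩ Set.Icc l (l + d) = {l, l + d}}

/-- The set of distances (delta set) of `M`. -/
def PMDelta (M : AddSubmonoid ℚ≥0) : Set ℕ :=
  ⋃ x ∈ {y : ℚ≥0 | y ∈ M ∧ y ≠ 0}, PMdistances M x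

/-- `(Mi)` is an approximation of `M`: an increasing sequence of atomic submonoids
with union `M` and increasing sets of atoms. -/
def PMapprox (M : AddSubmonoid ℚ≥0) (Mi : ℕ → AddSubmonoid ℚ≥0) : Prop :=
  (∀ i, Mi i ≤ Mi (i + 1)) ∧ (∀ i, PMatomic (Mi i)) ∧
  (∀ i, PMatoms (Mi i) ⊆ PMatoms (Mi (i + 1))) ∧
  (∀ x, x ∈ M ↔ ∃ i, x ∈ Mi i)

namespace PM16

/-- sum of powers of `r` over a multiset of exponents -/
def esum (r : ℚ≥0) (e : Multiset ℕ) : ℚ≥0 := (e.map (fun m => r ^ m)).sum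

lemma esum_zero (r : ℚ≥0) : esum r 0 = 0 := rfl

lemma esum_cons (r : ℚ≥0) (m : ℕ) (e : Multiset ℕ) :
    esum r (m ::ₘ e) = r ^ m + esum r e := by
  simp [esum]

lemma esum_add (r : ℚ≥0) (e f : Multiset ℕ) :
    esum r (e + f) = esum r e + esum r f := by
  simp [esum]

lemma esum_replicate (r : ℚ≥0) (c m : ℕ) :
    esum r (Multiset.replicate c m) = (c : ℚ≥0) * r ^ m := by
  simp [esum, Multiset.map_replicate, Multiset.sum_replicate, nsmul_eq_mul]

/-- natural-number version after clearing denominators with `b^M` -/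
def nsum (a b M : ℕ) (e : Multiset ℕ) : ℕ := (e.map (fun m => a ^ m * b ^ (M - m))).sum

lemma nsum_cons (a b M m : ℕ) (e : Multiset ℕ) :
    nsum a b M (m ::ₘ e) = a ^ m * b ^ (M - m) + nsum a b M e := by
  simp [nsum]

lemma exists_le_of_multiset (s : Multiset ℕ) : ∃ M, ∀ m ∈ s, m ≤ M := by
  induction s using Multiset.induction_on with
  | empty => exact ⟨0, by simp⟩
  | cons m s ih =>
    obtain ⟨M, hM⟩ := ih
    exact ⟨max m M, by
      intro k hk
      rcases Multiset.mem_cons.mp hk with h | h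
      · omega
      · exact le_trans (hM k h) (le_max_right _ _)⟩

lemma exists_max_of_ne_zero (s : Multiset ℕ) (hs : s ≠ 0) : ∃ M ∈ s, ∀ m ∈ s, m ≤ M := by
  induction s using Multiset.induction_on with
  | empty => exact absurd rfl hs
  | cons m s ih =>
    rcases eq_or_ne s 0 with h | h
    · subst h; exact ⟨m, Multiset.mem_cons_self _ _, by intro k hk; simp at hk; omega⟩
    · obtain ⟨M, hMs, hM⟩ := ih h
      refine ⟨max m M, ?_, ?_⟩
      · rcases le_total m M with h' | h'
        · rw [max_eq_right h']; exact Multiset.mem_cons_of_mem hMs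
        · rw [max_eq_left h']; exact Multiset.mem_cons_self _ _
      · intro k hk
        rcases Multiset.mem_cons.mp hk with h' | h'
        · omega
        · exact le_trans (hM k h') (le_max_right _ _)

variable {r : ℚ≥0} {a b : ℕ}

lemma nsum_cast (hrb : r * (b : ℚ≥0) = (a : ℚ≥0)) {M : ℕ} {e : Multiset ℕ}
    (hM : ∀ m ∈ e, m ≤ M) :
    (nsum a b M e : ℚ≥0) = esum r e * (b : ℚ≥0) ^ M := by
  induction e using Multiset.induction_on with
  | empty => simp [nsum, esum]
  | cons m e ih =>
    have hm : m ≤ M := hM m (Multiset.mem_cons_self _ _)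
    have ih' := ih (fun k hk => hM k (Multiset.mem_cons_of_mem hk))
    have key : (a : ℚ≥0) ^ m * (b : ℚ≥0) ^ (M - m) = r ^ m * (b : ℚ≥0) ^ M := by
      rw [← hrb, mul_pow, mul_assoc, ← pow_add]
      congr 2
      omega
    simp only [nsum, esum, Multiset.map_cons, Multiset.sum_cons, Nat.cast_add,
      Nat.cast_mul, Nat.cast_pow] at *
    rw [ih', key, add_mul]

lemma nsum_modb {M : ℕ} {e : Multiset ℕ} (hM : ∀ m ∈ e, m ≤ M) :
    ∃ t, nsum a b M e = e.count M * a ^ M + b * t := by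
  induction e using Multiset.induction_on with
  | empty => exact ⟨0, by simp [nsum]⟩
  | cons m e ih =>
    obtain ⟨t, ht⟩ := ih (fun k hk => hM k (Multiset.mem_cons_of_mem hk))
    have hm : m ≤ M := hM m (Multiset.mem_cons_self _ _)
    rcases eq_or_ne m M with h | h
    · refine ⟨t, ?_⟩
      subst h
      simp only [nsum, Multiset.map_cons, Multiset.sum_cons, Multiset.count_cons_self,
        Nat.sub_self, pow_zero, mul_one] at *
      rw [ht]
      ring
    · have h2 : m < M := lt_of_le_of_ne hm h
      refine ⟨a ^ m * b ^ (M - m - 1) + t, ?_⟩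
      have key : a ^ m * b ^ (M - m) = b * (a ^ m * b ^ (M - m - 1)) := by
        calc a ^ m * b ^ (M - m) = a ^ m * (b ^ (M - m - 1) * b) := by
              rw [← pow_succ]; congr 2; omega
          _ = b * (a ^ m * b ^ (M - m - 1)) := by ring
      simp only [nsum, Multiset.map_cons, Multiset.sum_cons] at *
      rw [Multiset.count_cons_of_ne (Ne.symm h), key, ht]
      ring

lemma nsum_modb2 {M : ℕ} {e : Multiset ℕ} (hM : ∀ m ∈ e, m ≤ M) (h1 : (M - 1) ∉ e) :
    ∃ t, nsum a b M e = e.count M * a ^ M + b ^ 2 * t := by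
  induction e using Multiset.induction_on with
  | empty => exact ⟨0, by simp [nsum]⟩
  | cons m e ih =>
    obtain ⟨t, ht⟩ := ih (fun k hk => hM k (Multiset.mem_cons_of_mem hk))
      (fun hc => h1 (Multiset.mem_cons_of_mem hc))
    have hm : m ≤ M := hM m (Multiset.mem_cons_self _ _)
    have hne1 : m ≠ M - 1 := fun hc => h1 (hc ▸ Multiset.mem_cons_self _ _)
    rcases eq_or_ne m M with h | h
    · refine ⟨t, ?_⟩
      subst h
      simp only [nsum, Multiset.map_cons, Multiset.sum_cons, Multiset.count_cons_self,
        Nat.sub_self, pow_zero, mul_one] at *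
      rw [ht]
      ring
    · have h2 : m + 2 ≤ M := by omega
      refine ⟨a ^ m * b ^ (M - m - 2) + t, ?_⟩
      have key : a ^ m * b ^ (M - m) = b ^ 2 * (a ^ m * b ^ (M - m - 2)) := by
        calc a ^ m * b ^ (M - m) = a ^ m * (b ^ (M - m - 2) * b ^ 2) := by
              rw [← pow_add]; congr 2; omega
          _ = b ^ 2 * (a ^ m * b ^ (M - m - 2)) := by ring
      simp only [nsum, Multiset.map_cons, Multiset.sum_cons] at *
      rw [Multiset.count_cons_of_ne (Ne.symm h), key, ht]
      ring

lemma esum_eq_zero_iff (hr : 0 < r) {e : Multiset ℕ} : esum r e = 0 ↔ e = 0 := by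
  constructor
  · intro h
    by_contra hne
    obtain ⟨m, hm⟩ := Multiset.exists_mem_of_ne_zero hne
    obtain ⟨e', he'⟩ := Multiset.exists_cons_of_mem hm
    rw [he'] at h
    simp only [esum, Multiset.map_cons, Multiset.sum_cons] at h
    have h1 : (0:ℚ≥0) < r ^ m := pow_pos hr m
    have h2 : (0:ℚ≥0) < r ^ m + (e'.map (fun m => r ^ m)).sum := lt_of_lt_of_le h1 le_self_add
    exact absurd h (ne_of_gt h2)
  · rintro rfl; rfl

lemma card_le_of_esum (hr : 1 ≤ r) (e : Multiset ℕ) :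
    (Multiset.card e : ℚ≥0) ≤ esum r e := by
  induction e using Multiset.induction_on with
  | empty => simp [esum]
  | cons m e ih =>
    simp only [esum, Multiset.map_cons, Multiset.sum_cons, Multiset.card_cons] at *
    push_cast
    have h1 : (1:ℚ≥0) ≤ r ^ m := one_le_pow₀ hr
    calc ((Multiset.card e : ℚ≥0) + 1) ≤ (e.map (fun m => r ^ m)).sum + r ^ m :=
          add_le_add ih h1
      _ = r ^ m + (e.map (fun m => r ^ m)).sum := by ring

lemma esum_le_card_mul (hr : 1 ≤ r) {M : ℕ} {e : Multiset ℕ} (hM : ∀ m ∈ e, m ≤ M) :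
    esum r e ≤ (Multiset.card e : ℚ≥0) * r ^ M := by
  induction e using Multiset.induction_on with
  | empty => simp [esum]
  | cons m e ih =>
    have hm : m ≤ M := hM m (Multiset.mem_cons_self _ _)
    have ih' := ih (fun k hk => hM k (Multiset.mem_cons_of_mem hk))
    simp only [esum, Multiset.map_cons, Multiset.sum_cons, Multiset.card_cons] at *
    push_cast
    have h1 : r ^ m ≤ r ^ M := pow_le_pow_right₀ hr hm
    calc r ^ m + (e.map (fun k => r ^ k)).sum ≤ r ^ M + (Multiset.card e : ℚ≥0) * r ^ M :=
          add_le_add h1 ih'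
      _ = ((Multiset.card e : ℚ≥0) + 1) * r ^ M := by ring

lemma pow_mem_le_esum (m : ℕ) {e : Multiset ℕ} (hm : m ∈ e) : r ^ m ≤ esum r e := by
  obtain ⟨e', he'⟩ := Multiset.exists_cons_of_mem hm
  rw [he']
  simp only [esum, Multiset.map_cons, Multiset.sum_cons]
  exact le_self_add

variable {r : ℚ≥0} {a b : ℕ}

/-- membership in the closure of a set of powers, in terms of exponent multisets -/
lemma mem_closure_iff (P : ℕ → Prop) (x : ℚ≥0) :
    x ∈ AddSubmonoid.closure {q : ℚ≥0 | ∃ n : ℕ, P n ∧ q = r ^ n} ↔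
      ∃ e : Multiset ℕ, (∀ m ∈ e, P m) ∧ esum r e = x := by
  constructor
  · intro hx
    obtain ⟨s, hs, hsum⟩ := AddSubmonoid.exists_multiset_of_mem_closure hx
    clear hx
    induction s using Multiset.induction_on generalizing x with
    | empty => exact ⟨0, by simp, by simpa [esum] using hsum⟩
    | cons q s ih =>
      obtain ⟨n, hPn, hq⟩ := hs q (Multiset.mem_cons_self _ _)
      obtain ⟨e, hPe, hesum⟩ := ih (s.sum) (fun p hp => hs p (Multiset.mem_cons_of_mem hp)) rfl
      refine ⟨n ::ₘ e, ?_, ?_⟩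
      · intro m hm
        rcases Multiset.mem_cons.mp hm with h | h
        · exact h ▸ hPn
        · exact hPe m h
      · simp only [esum, Multiset.map_cons, Multiset.sum_cons] at *
        rw [hesum, ← hq]; exact hsum
  · rintro ⟨e, hPe, rfl⟩
    induction e using Multiset.induction_on with
    | empty => exact AddSubmonoid.zero_mem _
    | cons m e ih =>
      simp only [esum, Multiset.map_cons, Multiset.sum_cons]
      exact AddSubmonoid.add_mem _
        (AddSubmonoid.subset_closure ⟨m, hPe m (Multiset.mem_cons_self _ _), rfl⟩)
        (ih (fun k hk => hPe k (Multiset.mem_cons_of_mem hk)))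

/-- convert a multiset of powers into a multiset of exponents -/
lemma exists_exponents (P : ℕ → Prop) (s : Multiset ℚ≥0)
    (hs : ∀ q ∈ s, ∃ n, P n ∧ q = r ^ n) :
    ∃ e : Multiset ℕ, (∀ m ∈ e, P m) ∧ e.map (fun m => r ^ m) = s := by
  induction s using Multiset.induction_on with
  | empty => exact ⟨0, by simp, by simp⟩
  | cons q s ih =>
    obtain ⟨n, hPn, hq⟩ := hs q (Multiset.mem_cons_self _ _)
    obtain ⟨e, hPe, he⟩ := ih (fun p hp => hs p (Multiset.mem_cons_of_mem hp))
    refine ⟨n ::ₘ e, ?_, ?_⟩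
    · intro m hm
      rcases Multiset.mem_cons.mp hm with h | h
      · exact h ▸ hPn
      · exact hPe m h
    · rw [Multiset.map_cons, he, hq]

variable {r : ℚ≥0} {a b : ℕ}

lemma powers_eq : {q : ℚ≥0 | ∃ n : ℕ, q = r ^ n} =
    {q : ℚ≥0 | ∃ n : ℕ, (fun _ => True) n ∧ q = r ^ n} := by
  ext q; simp

lemma ba_lt (h1 : 1 < r) (hrb : r * (b : ℚ≥0) = (a : ℚ≥0)) (hb2 : 2 ≤ b) : b < a := by
  have hb0 : (0:ℚ≥0) < (b:ℚ≥0) := by positivity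
  have : (b : ℚ≥0) < (a : ℚ≥0) := by
    calc (b:ℚ≥0) = 1 * b := (one_mul _).symm
    _ < r * b := by exact mul_lt_mul_of_pos_right h1 hb0
    _ = a := hrb
  exact_mod_cast this

lemma pow_atom (h1 : 1 < r) (hrb : r * (b : ℚ≥0) = (a : ℚ≥0)) (hb2 : 2 ≤ b)
    (hcop : Nat.Coprime a b) (M : AddSubmonoid ℚ≥0)
    (hM : M ≤ AddSubmonoid.closure {q : ℚ≥0 | ∃ n : ℕ, q = r ^ n})
    (n : ℕ) (hmem : r ^ n ∈ M) : r ^ n ∈ PMatoms M := by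
  have hr0 : 0 < r := lt_trans one_pos h1
  have hba : b < a := ba_lt h1 hrb hb2
  refine ⟨hmem, by positivity, ?_⟩
  rintro y hy z hz hy0 hz0 hcon
  rw [powers_eq] at hM
  obtain ⟨e₁, -, he₁⟩ := (mem_closure_iff _ y).mp (hM hy)
  obtain ⟨e₂, -, he₂⟩ := (mem_closure_iff _ z).mp (hM hz)
  have he₁0 : e₁ ≠ 0 := fun h => hy0 (by rw [← he₁, h]; rfl)
  have he₂0 : e₂ ≠ 0 := fun h => hz0 (by rw [← he₂, h]; rfl)
  set e : Multiset ℕ := e₁ + e₂ with he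
  have hesum : esum r e = r ^ n := by
    simp only [he, esum, Multiset.map_add, Multiset.sum_add]
    rw [show (Multiset.map (fun m => r ^ m) e₁).sum = esum r e₁ from rfl,
      show (Multiset.map (fun m => r ^ m) e₂).sum = esum r e₂ from rfl, he₁, he₂, ← hcon]
  have hcard : 2 ≤ Multiset.card e := by
    rw [he, Multiset.card_add]
    have h1' : 1 ≤ Multiset.card e₁ := Multiset.card_pos.mpr he₁0
    have h2' : 1 ≤ Multiset.card e₂ := Multiset.card_pos.mpr he₂0
    omega
  have hle : ∀ m ∈ e, m ≤ n := by
    intro m hm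
    have : r ^ m ≤ r ^ n := hesum ▸ pow_mem_le_esum m hm
    exact (pow_le_pow_iff_right₀ h1).mp this
  have hcast : (nsum a b n e : ℚ≥0) = ((a ^ n : ℕ) : ℚ≥0) := by
    rw [nsum_cast hrb hle, hesum]
    push_cast
    rw [← mul_pow, hrb]
  have hnat : nsum a b n e = a ^ n := Nat.cast_injective hcast
  obtain ⟨t, ht⟩ := nsum_modb (a := a) (b := b) hle
  have han : 1 ≤ a ^ n := Nat.one_le_pow _ _ (by omega)
  set c := e.count n with hc
  have hcases : c = 0 ∨ c = 1 ∨ 2 ≤ c := by omega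
  rcases hcases with h0 | h1c | h2c
  · rw [hnat, h0] at ht
    simp at ht
    have hdvd : b ∣ a ^ n := ⟨t, ht⟩
    have := (Nat.Coprime.pow_right n hcop.symm).eq_one_of_dvd hdvd
    omega
  · have hmemn : n ∈ e := by
      rw [← Multiset.count_pos, ← hc]; omega
    obtain ⟨e', he'⟩ := Multiset.exists_cons_of_mem hmemn
    rw [he'] at hesum
    simp only [esum, Multiset.map_cons, Multiset.sum_cons] at hesum
    have : (Multiset.map (fun m => r ^ m) e').sum = 0 := by
      have := hesum
      exact (add_eq_left).mp this
    have he'0 : e' = 0 := (esum_eq_zero_iff hr0).mp this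
    rw [he'0] at he'
    have : Multiset.card e = 1 := by rw [he']; rfl
    omega
  · rw [hnat, hc] at ht
    have : 2 * a ^ n ≤ Multiset.count n e * a ^ n := Nat.mul_le_mul_right _ h2c
    omega

variable {r : ℚ≥0} {a b : ℕ}

lemma closure_le_S (P : ℕ → Prop) :
    AddSubmonoid.closure {q : ℚ≥0 | ∃ n : ℕ, P n ∧ q = r ^ n} ≤
      AddSubmonoid.closure {q : ℚ≥0 | ∃ n : ℕ, q = r ^ n} := by
  apply AddSubmonoid.closure_mono
  rintro q ⟨n, -, hq⟩
  exact ⟨n, hq⟩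

lemma atoms_char (h1 : 1 < r) (hrb : r * (b : ℚ≥0) = (a : ℚ≥0)) (hb2 : 2 ≤ b)
    (hcop : Nat.Coprime a b) (P : ℕ → Prop) :
    PMatoms (AddSubmonoid.closure {q : ℚ≥0 | ∃ n : ℕ, P n ∧ q = r ^ n}) =
      {q : ℚ≥0 | ∃ n : ℕ, P n ∧ q = r ^ n} := by
  have hr0 : 0 < r := lt_trans one_pos h1
  set M := AddSubmonoid.closure {q : ℚ≥0 | ∃ n : ℕ, P n ∧ q = r ^ n} with hMdef
  ext q
  constructor
  · rintro ⟨hqM, hq0, hq⟩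
    obtain ⟨e, hPe, hesum⟩ := (mem_closure_iff P q).mp hqM
    have he0 : e ≠ 0 := by
      intro h
      exact hq0 (by rw [← hesum, h]; rfl)
    obtain ⟨m, hm⟩ := Multiset.exists_mem_of_ne_zero he0
    obtain ⟨e', he'⟩ := Multiset.exists_cons_of_mem hm
    rcases eq_or_ne e' 0 with h0 | h0
    · refine ⟨m, hPe m hm, ?_⟩
      rw [← hesum, he', h0]
      simp [esum]
    · exfalso
      have hy : r ^ m ∈ M := AddSubmonoid.subset_closure ⟨m, hPe m hm, rfl⟩
      have hz : esum r e' ∈ M := (mem_closure_iff P _).mpr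
        ⟨e', fun k hk => hPe k (he' ▸ Multiset.mem_cons_of_mem hk), rfl⟩
      have hz0 : esum r e' ≠ 0 := fun h => h0 ((esum_eq_zero_iff hr0).mp h)
      refine hq (r ^ m) hy (esum r e') hz (by positivity) hz0 ?_
      rw [← hesum, he']
      simp [esum]
  · rintro ⟨n, hPn, rfl⟩
    exact pow_atom h1 hrb hb2 hcop M (closure_le_S P) n
      (AddSubmonoid.subset_closure ⟨n, hPn, rfl⟩)

lemma lengths_char (h1 : 1 < r) (hrb : r * (b : ℚ≥0) = (a : ℚ≥0)) (hb2 : 2 ≤ b)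
    (hcop : Nat.Coprime a b) (P : ℕ → Prop) (x : ℚ≥0) :
    PMlengths (AddSubmonoid.closure {q : ℚ≥0 | ∃ n : ℕ, P n ∧ q = r ^ n}) x =
      {L | ∃ e : Multiset ℕ, (∀ m ∈ e, P m) ∧ esum r e = x ∧ Multiset.card e = L} := by
  have hA := atoms_char h1 hrb hb2 hcop P
  ext L
  constructor
  · rintro ⟨s, ⟨hs, hsum⟩, hcard⟩
    have hs' : ∀ q ∈ s, ∃ n, P n ∧ q = r ^ n := by
      intro q hq
      have := hs q hq
      rw [hA] at this
      exact this
    obtain ⟨e, hPe, he⟩ := exists_exponents P s hs'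
    refine ⟨e, hPe, ?_, ?_⟩
    · rw [esum, he, hsum]
    · rw [← hcard, ← he, Multiset.card_map]
  · rintro ⟨e, hPe, hesum, hcard⟩
    refine ⟨e.map (fun m => r ^ m), ⟨?_, hesum⟩, by rw [Multiset.card_map, hcard]⟩
    intro q hq
    obtain ⟨m, hme, rfl⟩ := Multiset.mem_map.mp hq
    rw [hA]
    exact ⟨m, hPe m hme, rfl⟩

/-- allowed exponents in `M i` -/
def Pi (i : ℕ) (n : ℕ) : Prop := (∃ k, n = 2 * k) ∨ (∃ j, 1 ≤ j ∧ j ≤ i ∧ n = 2 * j - 1)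

variable {r : ℚ≥0} {a b : ℕ}

lemma part2_core (h1 : 1 < r) (hrb : r * (b : ℚ≥0) = (a : ℚ≥0)) (hb2 : 2 ≤ b)
    (hcop : Nat.Coprime a b) (i : ℕ) {e : Multiset ℕ}
    (hPe : ∀ m ∈ e, Pi i m)
    (hesum : esum r e = ((a : ℚ≥0)) ^ 2 * r ^ (2 * i)) :
    Multiset.card e = b ^ 2 ∨ a ^ 2 ≤ Multiset.card e := by
  have hr0 : 0 < r := lt_trans one_pos h1
  have hr1 : 1 ≤ r := le_of_lt h1
  by_cases hall : ∀ m ∈ e, m ≤ 2 * i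
  · right
    have hle := esum_le_card_mul hr1 hall
    rw [hesum] at hle
    rw [mul_comm ((a:ℚ≥0) ^ 2) _, mul_comm ((Multiset.card e : ℚ≥0)) _] at hle
    have hpow : (0:ℚ≥0) < r ^ (2 * i) := pow_pos hr0 _
    have h2 : ((a:ℚ≥0)) ^ 2 ≤ (Multiset.card e : ℚ≥0) := le_of_mul_le_mul_left hle hpow
    exact_mod_cast h2
  · left
    push_neg at hall
    obtain ⟨m₀, hm₀e, hm₀⟩ := hall
    have he0 : e ≠ 0 := fun h => by simp [h] at hm₀e
    obtain ⟨M, hMe, hMmax⟩ := exists_max_of_ne_zero e he0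
    have hM0 : 2 * i < M := lt_of_lt_of_le hm₀ (hMmax m₀ hm₀e)
    have hMeven : M ≥ 2 * i + 2 := by
      rcases hPe M hMe with ⟨k, hk⟩ | ⟨j, hj1, hj2, hj3⟩
      · omega
      · omega
    have hM1 : (M - 1) ∉ e := by
      intro hmem
      rcases hPe (M - 1) hmem with ⟨k, hk⟩ | ⟨j, hj1, hj2, hj3⟩
      · rcases hPe M hMe with ⟨k', hk'⟩ | ⟨j', hj1', hj2', hj3'⟩
        · omega
        · omega
      · omega
    -- the natural-number identity
    have hx2 : esum r e * (b:ℚ≥0) ^ M = ((a ^ (2 * i + 2) * b ^ (M - 2 * i) : ℕ) : ℚ≥0) := by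
      rw [hesum]
      push_cast
      have hsplit : ((b:ℚ≥0)) ^ M = (b:ℚ≥0) ^ (2 * i) * (b:ℚ≥0) ^ (M - 2 * i) := by
        rw [← pow_add]; congr 1; omega
      rw [hsplit]
      have : r ^ (2 * i) * (b:ℚ≥0) ^ (2 * i) = (a:ℚ≥0) ^ (2 * i) := by
        rw [← mul_pow, hrb]
      calc (a:ℚ≥0) ^ 2 * r ^ (2 * i) * ((b:ℚ≥0) ^ (2 * i) * (b:ℚ≥0) ^ (M - 2 * i))
          = (a:ℚ≥0) ^ 2 * (r ^ (2 * i) * (b:ℚ≥0) ^ (2 * i)) * (b:ℚ≥0) ^ (M - 2 * i) := by ring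
        _ = (a:ℚ≥0) ^ 2 * (a:ℚ≥0) ^ (2 * i) * (b:ℚ≥0) ^ (M - 2 * i) := by rw [this]
        _ = (a:ℚ≥0) ^ (2 * i + 2) * (b:ℚ≥0) ^ (M - 2 * i) := by rw [← pow_add]; ring_nf
    have hnat : nsum a b M e = a ^ (2 * i + 2) * b ^ (M - 2 * i) :=
      Nat.cast_injective ((nsum_cast hrb hMmax).trans hx2)
    obtain ⟨t, ht⟩ := nsum_modb2 (a := a) (b := b) hMmax hM1
    set c := e.count M with hc
    -- b^2 divides c
    have hdvd : b ^ 2 ∣ c * a ^ M := by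
      have hKsplit : a ^ (2 * i + 2) * b ^ (M - 2 * i) =
          b ^ 2 * (a ^ (2 * i + 2) * b ^ (M - 2 * i - 2)) := by
        calc a ^ (2 * i + 2) * b ^ (M - 2 * i)
            = a ^ (2 * i + 2) * (b ^ (M - 2 * i - 2) * b ^ 2) := by
              rw [← pow_add]; congr 2; omega
          _ = b ^ 2 * (a ^ (2 * i + 2) * b ^ (M - 2 * i - 2)) := by ring
      set K := a ^ (2 * i + 2) * b ^ (M - 2 * i - 2) with hK
      have heq : c * a ^ M + b ^ 2 * t = b ^ 2 * K := by rw [← ht, hnat, hKsplit]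
      have heq2 : c * a ^ M = b ^ 2 * K - b ^ 2 * t := by omega
      rw [heq2]
      exact Nat.dvd_sub (dvd_mul_right _ _) (dvd_mul_right _ _)
    have hdvdc : b ^ 2 ∣ c := (Nat.Coprime.pow 2 M hcop.symm).dvd_of_dvd_mul_right hdvd
    have hc1 : 0 < c := Multiset.count_pos.mpr hMe
    have hcb : b ^ 2 ≤ c := Nat.le_of_dvd hc1 hdvdc
    classical
    set f := e.filter (fun m => ¬ m = M) with hf
    have hsplit_e : Multiset.filter (fun m => m = M) e + f = e := Multiset.filter_add_not _ e
    have hrep : Multiset.filter (fun m => m = M) e = Multiset.replicate c M := by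
      rw [hc]
      exact Multiset.filter_eq' e M
    have hesum_split : esum r e = (c : ℚ≥0) * r ^ M + esum r f := by
      rw [← hsplit_e, esum_add, hrep, esum_replicate]
    -- x = b^2 * r^(2i+2)
    have hxeq : ((a : ℚ≥0)) ^ 2 * r ^ (2 * i) = ((b:ℚ≥0)) ^ 2 * r ^ (2 * i + 2) := by
      have hab : ((a:ℚ≥0)) ^ 2 = ((b:ℚ≥0)) ^ 2 * r ^ 2 := by
        rw [← hrb]; ring
      rw [hab, pow_add]; ring
    have hchain1 : (c : ℚ≥0) * r ^ M ≤ ((a : ℚ≥0)) ^ 2 * r ^ (2 * i) := by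
      rw [← hesum, hesum_split]; exact le_self_add
    have hchain2 : ((b:ℚ≥0)) ^ 2 * r ^ (2 * i + 2) ≤ ((b:ℚ≥0)) ^ 2 * r ^ M :=
      mul_le_mul_right (pow_le_pow_right₀ hr1 hMeven) _
    have hchain3 : ((b:ℚ≥0)) ^ 2 * r ^ M ≤ (c : ℚ≥0) * r ^ M := by
      have : ((b:ℚ≥0)) ^ 2 ≤ (c : ℚ≥0) := by exact_mod_cast hcb
      exact mul_le_mul_left this _
    have hceq : (c : ℚ≥0) * r ^ M = ((a : ℚ≥0)) ^ 2 * r ^ (2 * i) := by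
      apply le_antisymm hchain1
      rw [hxeq]
      exact le_trans hchain2 hchain3
    have hbc : ((b:ℚ≥0)) ^ 2 * r ^ M = (c : ℚ≥0) * r ^ M := by
      apply le_antisymm hchain3
      rw [hceq, hxeq]
      exact hchain2
    have hcb2 : c = b ^ 2 := by
      have hpowpos : (0:ℚ≥0) < r ^ M := pow_pos hr0 _
      have : ((b:ℚ≥0)) ^ 2 = (c : ℚ≥0) := mul_right_cancel₀ (ne_of_gt hpowpos) hbc
      exact_mod_cast this.symm
    have hf0 : f = 0 := by
      have h0 : (c : ℚ≥0) * r ^ M + esum r f = (c : ℚ≥0) * r ^ M := by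
        rw [← hesum_split, hesum, hceq]
      have : esum r f = 0 := by
        have := add_left_cancel (a := (c : ℚ≥0) * r ^ M) (b := esum r f) (c := 0)
          (by rw [add_zero]; exact h0)
        exact this
      exact (esum_eq_zero_iff hr0).mp this
    have : e = Multiset.replicate c M := by
      rw [← hsplit_e, hrep, hf0, add_zero]
    rw [this, Multiset.card_replicate, hcb2]
variable {r : ℚ≥0} {a b : ℕ}

/-- trading `b` copies of `r^m` for `a` copies of `r^(m-1)` -/
lemma step_up (hrb : r * (b : ℚ≥0) = (a : ℚ≥0)) {e : Multiset ℕ} {m : ℕ} (hm : 1 ≤ m)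
    (hcount : b ≤ e.count m) :
    ∃ e₂ : Multiset ℕ,
      esum r e₂ = esum r e ∧
      Multiset.card e₂ + b = Multiset.card e + a ∧
      (∀ k ∈ e₂, k ∈ e ∨ k = m - 1) := by
  classical
  have hrep : Multiset.replicate b m ≤ e := Multiset.le_count_iff_replicate_le.mp hcount
  set g := e - Multiset.replicate b m with hg
  have he : Multiset.replicate b m + g = e := by
    rw [hg, add_comm]
    exact tsub_add_cancel_of_le hrep
  refine ⟨Multiset.replicate a (m - 1) + g, ?_, ?_, ?_⟩
  · rw [esum_add, esum_replicate, ← he, esum_add, esum_replicate]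
    congr 1
    have hpow : r ^ m = r ^ (m - 1) * r := by
      rw [← pow_succ]; congr 1; omega
    rw [hpow, ← mul_assoc, mul_comm ((b:ℚ≥0)) (r ^ (m-1)), mul_assoc, mul_comm ((b:ℚ≥0)) r, hrb,
      mul_comm (r ^ (m-1)) ((a:ℚ≥0))]
  · rw [Multiset.card_add, Multiset.card_replicate, ← he, Multiset.card_add,
      Multiset.card_replicate]
    omega
  · intro k hk
    rcases Multiset.mem_add.mp hk with h | h
    · right; exact (Multiset.eq_of_mem_replicate h)
    · left; rw [← he]; exact Multiset.mem_add.mpr (Or.inr h)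

/-- a reduced factorization (all counts of positive exponents `< b`) is unique -/
lemma reduced_unique (h1 : 1 < r) (hrb : r * (b : ℚ≥0) = (a : ℚ≥0)) (hb2 : 2 ≤ b)
    (hcop : Nat.Coprime a b) :
    ∀ (M : ℕ) (e f : Multiset ℕ), (∀ m ∈ e, m ≤ M) → (∀ m ∈ f, m ≤ M) →
      (∀ m, 1 ≤ m → e.count m < b) → (∀ m, 1 ≤ m → f.count m < b) →
      esum r e = esum r f → e = f := by
  have ha1 : 1 ≤ a := by
    by_contra h
    push_neg at h
    interval_cases a
    · have : r * (b:ℚ≥0) = 0 := by rw [hrb]; simp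
      have hb0 : (0:ℚ≥0) < (b:ℚ≥0) := by
        have : 0 < b := by omega
        exact_mod_cast this
      have hr0 : 0 < r := lt_trans one_pos h1
      have : (0:ℚ≥0) < r * (b:ℚ≥0) := mul_pos hr0 hb0
      simp_all
  intro M
  induction M with
  | zero =>
    intro e f he hf _ _ hsum
    have he' : e = Multiset.replicate (Multiset.card e) 0 :=
      Multiset.eq_replicate_card.mpr (fun m hm => Nat.le_zero.mp (he m hm))
    have hf' : f = Multiset.replicate (Multiset.card f) 0 :=
      Multiset.eq_replicate_card.mpr (fun m hm => Nat.le_zero.mp (hf m hm))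
    rw [he', hf'] at hsum ⊢
    rw [esum_replicate, esum_replicate, pow_zero, mul_one, mul_one] at hsum
    have : Multiset.card e = Multiset.card f := by exact_mod_cast hsum
    rw [this]
  | succ M ih =>
    intro e f he hf hre hrf hsum
    classical
    -- counts at M+1 agree
    have hnsum : nsum a b (M+1) e = nsum a b (M+1) f := by
      have h1' := nsum_cast (r := r) hrb he
      have h2' := nsum_cast (r := r) hrb hf
      have : ((nsum a b (M+1) e : ℕ) : ℚ≥0) = ((nsum a b (M+1) f : ℕ) : ℚ≥0) := by
        rw [h1', h2', hsum]
      exact_mod_cast this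
    obtain ⟨t₁, ht₁⟩ := nsum_modb (a := a) (b := b) he
    obtain ⟨t₂, ht₂⟩ := nsum_modb (a := a) (b := b) hf
    have hkey : e.count (M+1) * a ^ (M+1) + b * t₁ = f.count (M+1) * a ^ (M+1) + b * t₂ := by
      omega
    have hmod : e.count (M+1) * a ^ (M+1) ≡ f.count (M+1) * a ^ (M+1) [MOD b] := by
      unfold Nat.ModEq
      rw [← Nat.add_mul_mod_self_left (e.count (M+1) * a ^ (M+1)) b t₁,
        ← Nat.add_mul_mod_self_left (f.count (M+1) * a ^ (M+1)) b t₂, hkey]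
    have hcop' : Nat.Coprime (a ^ (M+1)) b := Nat.Coprime.pow_left (M+1) hcop
    have hceq : e.count (M+1) = f.count (M+1) := by
      have := Nat.ModEq.cancel_right_of_coprime hcop'.symm hmod
      have h1'' : e.count (M+1) < b := hre (M+1) (by omega)
      have h2'' : f.count (M+1) < b := hrf (M+1) (by omega)
      calc e.count (M+1) = e.count (M+1) % b := (Nat.mod_eq_of_lt h1'').symm
        _ = f.count (M+1) % b := this
        _ = f.count (M+1) := Nat.mod_eq_of_lt h2''
    set e' := e.filter (fun m => ¬ m = M+1) with he'
    set f' := f.filter (fun m => ¬ m = M+1) with hf'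
    have hesplit : Multiset.replicate (e.count (M+1)) (M+1) + e' = e := by
      rw [← Multiset.filter_eq' e (M+1)]
      exact Multiset.filter_add_not _ e
    have hfsplit : Multiset.replicate (e.count (M+1)) (M+1) + f' = f := by
      rw [hceq, ← Multiset.filter_eq' f (M+1)]
      exact Multiset.filter_add_not _ f
    have hsum' : esum r e' = esum r f' := by
      have h1' : esum r (Multiset.replicate (e.count (M+1)) (M+1) + e') =
          esum r (Multiset.replicate (e.count (M+1)) (M+1) + f') := by
        rw [hesplit, hfsplit, hsum]
      rw [esum_add, esum_add] at h1'
      exact add_left_cancel h1'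
    have heq' : e' = f' := by
      apply ih e' f'
      · intro m hm
        have h2' : m ∈ e := by rw [← hesplit]; exact Multiset.mem_add.mpr (Or.inr hm)
        have h3' := he m h2'
        have h4' : ¬ m = M+1 := by
          have := Multiset.of_mem_filter hm
          simpa using this
        omega
      · intro m hm
        have h2' : m ∈ f := by rw [← hfsplit]; exact Multiset.mem_add.mpr (Or.inr hm)
        have h3' := hf m h2'
        have h4' : ¬ m = M+1 := by
          have := Multiset.of_mem_filter hm
          simpa using this
        omega
      · intro m hm
        exact lt_of_le_of_lt (Multiset.count_le_of_le m (Multiset.filter_le _ e)) (hre m hm)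
      · intro m hm
        exact lt_of_le_of_lt (Multiset.count_le_of_le m (Multiset.filter_le _ f)) (hrf m hm)
      · exact hsum'
    rw [← hfsplit, ← heq']
    exact hesplit.symm
variable {r : ℚ≥0} {a b : ℕ}

lemma to_reduced (h1 : 1 < r) (hrb : r * (b : ℚ≥0) = (a : ℚ≥0)) (hb2 : 2 ≤ b) :
    ∀ e : Multiset ℕ, ∃ f : Multiset ℕ,
      esum r f = esum r e ∧ (∀ m, 1 ≤ m → f.count m < b) ∧
      Multiset.card e ≤ Multiset.card f := by
  have hr1 : 1 ≤ r := le_of_lt h1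
  have hba : b < a := ba_lt h1 hrb hb2
  intro e
  set x := esum r e with hx
  set B := Nat.ceil x with hB
  have hbound : ∀ g : Multiset ℕ, esum r g = x → Multiset.card g ≤ B := by
    intro g hg
    have h' : (Multiset.card g : ℚ≥0) ≤ x := hg ▸ card_le_of_esum hr1 g
    have h'' : (Multiset.card g : ℚ≥0) ≤ (B : ℚ≥0) := le_trans h' (Nat.le_ceil x)
    exact_mod_cast h''
  suffices h : ∀ k : ℕ, ∀ g : Multiset ℕ, esum r g = x → B ≤ Multiset.card g + k →
      ∃ f : Multiset ℕ, esum r f = x ∧ (∀ m, 1 ≤ m → f.count m < b) ∧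
        Multiset.card g ≤ Multiset.card f by
    exact h B e rfl (by omega)
  intro k
  induction k with
  | zero =>
    intro g hg hcard
    by_cases hred : ∀ m, 1 ≤ m → g.count m < b
    · exact ⟨g, hg, hred, le_refl _⟩
    · exfalso
      push_neg at hred
      obtain ⟨m, hm1, hmb⟩ := hred
      obtain ⟨e₂, he₂sum, he₂card, -⟩ := step_up hrb hm1 hmb
      have h1' : Multiset.card e₂ ≤ B := hbound e₂ (by rw [he₂sum, hg])
      have h2' : Multiset.card g ≤ B := hbound g hg
      omega
  | succ k ih =>
    intro g hg hcard
    by_cases hred : ∀ m, 1 ≤ m → g.count m < b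
    · exact ⟨g, hg, hred, le_refl _⟩
    · push_neg at hred
      obtain ⟨m, hm1, hmb⟩ := hred
      obtain ⟨e₂, he₂sum, he₂card, -⟩ := step_up hrb hm1 hmb
      have h1' : Multiset.card e₂ ≤ B := hbound e₂ (by rw [he₂sum, hg])
      obtain ⟨f, hf1, hf2, hf3⟩ := ih e₂ (by rw [he₂sum, hg]) (by omega)
      exact ⟨f, hf1, hf2, by omega⟩

lemma reduced_max (h1 : 1 < r) (hrb : r * (b : ℚ≥0) = (a : ℚ≥0)) (hb2 : 2 ≤ b)
    (hcop : Nat.Coprime a b) {e g : Multiset ℕ}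
    (hred : ∀ m, 1 ≤ m → e.count m < b) (hsum : esum r g = esum r e) :
    Multiset.card g ≤ Multiset.card e := by
  obtain ⟨f, hf1, hf2, hf3⟩ := to_reduced h1 hrb hb2 g
  obtain ⟨M, hM⟩ := exists_le_of_multiset (e + f)
  have hfe : f = e := by
    apply reduced_unique h1 hrb hb2 hcop M
    · intro m hm; exact hM m (Multiset.mem_add.mpr (Or.inr hm))
    · intro m hm; exact hM m (Multiset.mem_add.mpr (Or.inl hm))
    · exact hf2
    · exact hred
    · rw [hf1, hsum]
  rw [← hfe]
  exact hf3


lemma Pi_mono {i i' n : ℕ} (h : i ≤ i') (hP : Pi i n) : Pi i' n := by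
  rcases hP with ⟨k, hk⟩ | ⟨j, h1, h2, h3⟩
  · exact Or.inl ⟨k, hk⟩
  · exact Or.inr ⟨j, h1, by omega, h3⟩

lemma genset_eq (r : ℚ≥0) (i : ℕ) :
    ({q : ℚ≥0 | ∃ k : ℕ, q = r ^ (2 * k)} ∪
     {q : ℚ≥0 | ∃ j : ℕ, 1 ≤ j ∧ j ≤ i ∧ q = r ^ (2 * j - 1)}) =
    {q : ℚ≥0 | ∃ n : ℕ, Pi i n ∧ q = r ^ n} := by
  ext q
  constructor
  · rintro (⟨k, rfl⟩ | ⟨j, h1, h2, rfl⟩)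
    · exact ⟨2 * k, Or.inl ⟨k, rfl⟩, rfl⟩
    · exact ⟨2 * j - 1, Or.inr ⟨j, h1, h2, rfl⟩, rfl⟩
  · rintro ⟨n, (⟨k, rfl⟩ | ⟨j, h1, h2, h3⟩), rfl⟩
    · exact Or.inl ⟨k, rfl⟩
    · exact Or.inr ⟨j, h1, h2, by rw [h3]⟩

end PM16

open PM16

theorem stmt16 (r : ℚ≥0) (h1 : 1 < r) (hn : ∀ n : ℕ, r ≠ (n : ℚ≥0))
    (S : AddSubmonoid ℚ≥0)
    (hS : S = AddSubmonoid.closure {q : ℚ≥0 | ∃ n : ℕ, q = r ^ n})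
    (Mi : ℕ → AddSubmonoid ℚ≥0)
    (hMi : ∀ i, Mi i = AddSubmonoid.closure
      ({q : ℚ≥0 | ∃ k : ℕ, q = r ^ (2 * k)} ∪
       {q : ℚ≥0 | ∃ j : ℕ, 1 ≤ j ∧ j ≤ i ∧ q = r ^ (2 * j - 1)})) :
    PMapprox S (fun i => Mi (i + 1)) ∧
    (∀ i ≥ 1, r.num ^ 2 - r.den ^ 2 ∈ PMDelta (Mi i)) ∧
    PMDelta S ≠ ⋃ i ∈ Set.Ici 1, ⋂ j ∈ Set.Ici i, PMDelta (Mi j) := by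
  have hr0 : 0 < r := lt_trans one_pos h1
  set a := r.num with ha
  set b := r.den with hb
  have hbne : b ≠ 0 := r.den_ne_zero
  have hrb : r * (b : ℚ≥0) = (a : ℚ≥0) := by
    rw [ha, hb]
    exact NNRat.mul_den_eq_num r
  have hb2 : 2 ≤ b := by
    rcases Nat.lt_or_ge b 2 with h | h
    · interval_cases b
      · omega
      · exfalso
        apply hn a
        rw [← hrb]
        push_cast
        simp
    · exact h
  have hcop : Nat.Coprime a b := r.coprime_num_den
  have hba : b < a := ba_lt h1 hrb hb2
  have hMiP : ∀ i, Mi i = AddSubmonoid.closure {q : ℚ≥0 | ∃ n : ℕ, Pi i n ∧ q = r ^ n} := by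
    intro i
    rw [hMi i, genset_eq]
  have hSP : S = AddSubmonoid.closure {q : ℚ≥0 | ∃ n : ℕ, (fun _ => True) n ∧ q = r ^ n} := by
    rw [hS, powers_eq]
  -- Part 2 (for all i)
  have hpart2 : ∀ i : ℕ, (a ^ 2 - b ^ 2) ∈ PMDelta (Mi i) := by
    intro i
    set x : ℚ≥0 := ((a : ℚ≥0)) ^ 2 * r ^ (2 * i) with hx
    have hxeq : ((b : ℚ≥0)) ^ 2 * r ^ (2 * i + 2) = x := by
      have hab : ((a : ℚ≥0)) ^ 2 = ((b : ℚ≥0)) ^ 2 * r ^ 2 := by rw [← hrb]; ring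
      rw [hx, hab, pow_add]; ring
    have hLchar : PMlengths (Mi i) x =
        {L | ∃ e : Multiset ℕ, (∀ m ∈ e, Pi i m) ∧ esum r e = x ∧ Multiset.card e = L} := by
      rw [hMiP i]
      exact lengths_char h1 hrb hb2 hcop (Pi i) x
    have hbl : b ^ 2 ∈ PMlengths (Mi i) x := by
      rw [hLchar]
      refine ⟨Multiset.replicate (b ^ 2) (2 * i + 2), ?_, ?_, Multiset.card_replicate _ _⟩
      · intro m hm
        rw [Multiset.eq_of_mem_replicate hm]
        exact Or.inl ⟨i + 1, by omega⟩
      · rw [esum_replicate, ← hxeq]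
        push_cast
        ring
    have hal : a ^ 2 ∈ PMlengths (Mi i) x := by
      rw [hLchar]
      refine ⟨Multiset.replicate (a ^ 2) (2 * i), ?_, ?_, Multiset.card_replicate _ _⟩
      · intro m hm
        rw [Multiset.eq_of_mem_replicate hm]
        exact Or.inl ⟨i, rfl⟩
      · rw [esum_replicate, hx]
        push_cast
        ring
    have hb2a2 : b ^ 2 < a ^ 2 := Nat.pow_lt_pow_left hba two_ne_zero
    have hplus : b ^ 2 + (a ^ 2 - b ^ 2) = a ^ 2 := by omega
    have hx0 : x ≠ 0 := by
      have ha0 : (0 : ℚ≥0) < (a : ℚ≥0) := by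
        have : 0 < a := by omega
        exact_mod_cast this
      exact ne_of_gt (mul_pos (pow_pos ha0 2) (pow_pos hr0 _))
    have hxM : x ∈ Mi i := by
      rw [hMiP i]
      refine (mem_closure_iff (Pi i) x).mpr
        ⟨Multiset.replicate (a ^ 2) (2 * i), ?_, ?_⟩
      · intro m hm
        rw [Multiset.eq_of_mem_replicate hm]
        exact Or.inl ⟨i, rfl⟩
      · rw [esum_replicate, hx]; push_cast; ring
    refine Set.mem_biUnion (show x ∈ {y : ℚ≥0 | y ∈ Mi i ∧ y ≠ 0} from ⟨hxM, hx0⟩) ?_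
    refine ⟨by omega, b ^ 2, hbl, ?_⟩
    rw [hplus]
    ext L
    simp only [Set.mem_inter_iff, Set.mem_Icc, Set.mem_insert_iff, Set.mem_singleton_iff]
    constructor
    · rintro ⟨hL, hIcc1, hIcc2⟩
      rw [hLchar] at hL
      obtain ⟨e, hPe, hesum, hcard⟩ := hL
      have hcore := part2_core h1 hrb hb2 hcop i hPe (by rw [hesum, hx])
      omega
    · rintro (rfl | rfl)
      · exact ⟨hbl, by omega, by omega⟩
      · exact ⟨hal, by omega, by omega⟩
  refine ⟨?_, ?_, ?_⟩
  · -- PMapprox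
    refine ⟨?_, ?_, ?_, ?_⟩
    · intro i
      simp only
      rw [hMiP, hMiP]
      apply AddSubmonoid.closure_mono
      rintro q ⟨n, hPn, rfl⟩
      exact ⟨n, Pi_mono (by omega) hPn, rfl⟩
    · intro i x hx
      simp only at hx ⊢
      rw [hMiP] at hx ⊢
      rw [atoms_char h1 hrb hb2 hcop]
      exact hx
    · intro i q hq
      simp only at hq ⊢
      rw [hMiP, atoms_char h1 hrb hb2 hcop] at hq ⊢
      obtain ⟨n, hPn, rfl⟩ := hq
      exact ⟨n, Pi_mono (by omega) hPn, rfl⟩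
    · intro x
      constructor
      · intro hx
        rw [hSP] at hx
        obtain ⟨e, -, hesum⟩ := (mem_closure_iff _ x).mp hx
        obtain ⟨M, hM⟩ := exists_le_of_multiset e
        refine ⟨M, ?_⟩
        simp only
        rw [hMiP]
        refine (mem_closure_iff (Pi (M + 1)) x).mpr ⟨e, ?_, hesum⟩
        intro m hm
        have hmM : m ≤ M := hM m hm
        rcases Nat.even_or_odd m with ⟨k, hk⟩ | ⟨j, hj⟩
        · exact Or.inl ⟨k, by omega⟩
        · exact Or.inr ⟨j + 1, by omega, by omega, by omega⟩
      · rintro ⟨i, hx⟩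
        simp only at hx
        rw [hMiP] at hx
        rw [hSP]
        refine AddSubmonoid.closure_mono ?_ hx
        rintro q ⟨n, -, rfl⟩
        exact ⟨n, trivial, rfl⟩
  · -- Part 2
    intro i _
    exact hpart2 i
  · -- Part 3
    intro hcontra
    have hRHS : (a ^ 2 - b ^ 2) ∈ ⋃ i ∈ Set.Ici 1, ⋂ j ∈ Set.Ici i, PMDelta (Mi j) := by
      refine Set.mem_biUnion (Set.mem_Ici.mpr (le_refl 1)) ?_
      exact Set.mem_biInter (fun j _ => hpart2 j)
    have hLHS : (a ^ 2 - b ^ 2) ∉ PMDelta S := by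
      intro hd
      obtain ⟨x, hxmem, hdist⟩ := Set.mem_iUnion₂.mp hd
      obtain ⟨hd0, l, hl, heq⟩ := hdist
      set d : ℕ := a ^ 2 - b ^ 2 with hdd
      have hld : l + d ∈ PMlengths S x := by
        have h2 : l + d ∈ ({l, l + d} : Set ℕ) := Or.inr rfl
        rw [← heq] at h2
        exact h2.1
      have hLchar : PMlengths S x =
          {L | ∃ e : Multiset ℕ, (∀ m ∈ e, (fun _ => True) m) ∧ esum r e = x ∧
            Multiset.card e = L} := by
        rw [hSP]
        exact lengths_char h1 hrb hb2 hcop _ x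
      rw [hLchar] at hl hld
      obtain ⟨e, -, hesum, hcard⟩ := hl
      obtain ⟨g, -, hgsum, hgcard⟩ := hld
      have hb2a2 : b ^ 2 < a ^ 2 := Nat.pow_lt_pow_left hba two_ne_zero
      by_cases hred : ∀ m, 1 ≤ m → e.count m < b
      · have := reduced_max h1 hrb hb2 hcop hred (by rw [hgsum, hesum])
        omega
      · push_neg at hred
        obtain ⟨m, hm1, hmb⟩ := hred
        obtain ⟨e₂, he₂sum, he₂card, -⟩ := step_up hrb hm1 hmb
        have hmem : Multiset.card e₂ ∈ PMlengths S x := by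
          rw [hLchar]
          exact ⟨e₂, fun _ _ => trivial, by rw [he₂sum, hesum], rfl⟩
        have hsq : a ^ 2 - b ^ 2 = (a + b) * (a - b) := Nat.sq_sub_sq a b
        have hmul : 2 * (a - b) ≤ (a + b) * (a - b) :=
          Nat.mul_le_mul_right _ (by omega)
        have hIcc : Multiset.card e₂ ∈ Set.Icc l (l + d) := by
          constructor <;> omega
        have h3 : Multiset.card e₂ ∈ ({l, l + d} : Set ℕ) := by
          rw [← heq]
          exact ⟨hmem, hIcc⟩
        rw [Set.mem_insert_iff, Set.mem_singleton_iff] at h3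
        rcases h3 with h3 | h3 <;> omega
    exact hLHS (hcontra ▸ hRHS)
end

section
/- Let r ∈ ℚ with r > 1, r ∉ ℕ, fix i ∈ ℕ, and let M_i := ⟨{r^{2k} : k ∈ ℕ₀} ∪ {r^{2j−1} : 1 ≤ j ≤ i}⟩ and x_i := n(r)² · r^{2i} ∈ M_i. Then the factorization of x_i as d(r)² copies of the atom r^{2i+2} is the unique factorization of minimum length of x_i in M_i. -/
open scoped NNRat ENNReal

section AuxStmt17

/-- Key identity: `r^m * d^K = n^m * d^(K-m)` for `m ≤ K`. -/
lemma stmt17_pow_den (r : ℚ≥0) {m K : ℕ} (h : m ≤ K) :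
    r ^ m * (r.den : ℚ≥0) ^ K = ((r.num ^ m * r.den ^ (K - m) : ℕ) : ℚ≥0) := by
  have hd : (r.den : ℚ≥0) * r = r.num := r.den_mul_eq_num
  have hK : K = m + (K - m) := by omega
  push_cast
  calc r ^ m * (r.den : ℚ≥0) ^ K
      = ((r.den : ℚ≥0) * r) ^ m * (r.den : ℚ≥0) ^ (K - m) := by
        rw [mul_pow, mul_comm ((r.den : ℚ≥0) ^ m), mul_assoc, ← pow_add]
        congr 2
    _ = (r.num : ℚ≥0) ^ m * (r.den : ℚ≥0) ^ (K - m) := by rw [hd]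

lemma stmt17_sum_map (r : ℚ≥0) (t : Multiset ℕ) (K : ℕ) (h : ∀ m ∈ t, m ≤ K) :
    (t.map (fun m => r ^ m)).sum * (r.den : ℚ≥0) ^ K
      = (((t.map (fun m => r.num ^ m * r.den ^ (K - m))).sum : ℕ) : ℚ≥0) := by
  rw [Nat.cast_multiset_sum, Multiset.map_map, ← Multiset.sum_map_mul_right]
  refine congrArg Multiset.sum (Multiset.map_congr rfl ?_)
  intro m hm
  exact stmt17_pow_den r (h m hm)

lemma stmt17_exists_max (t : Multiset ℕ) (h : t ≠ 0) : ∃ M ∈ t, ∀ m ∈ t, m ≤ M := by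
  have hne : t.toFinset.Nonempty := by simpa [Multiset.toFinset_nonempty] using h
  exact ⟨t.toFinset.max' hne, Multiset.mem_toFinset.mp (t.toFinset.max'_mem hne),
    fun m hm => t.toFinset.le_max' m (Multiset.mem_toFinset.mpr hm)⟩

lemma stmt17_all_eq_of_sum (s : Multiset ℚ≥0) (a : ℚ≥0) (hle : ∀ x ∈ s, x ≤ a)
    (h : s.sum = (Multiset.card s) • a) : ∀ x ∈ s, x = a := by
  revert hle h
  induction s using Multiset.induction with
  | empty => simp
  | cons b u ih =>
    intro hle h
    have hb : b ≤ a := hle b (Multiset.mem_cons_self b u)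
    have hs : u.sum ≤ (Multiset.card u) • a :=
      Multiset.sum_le_card_nsmul u a (fun y hy => hle y (Multiset.mem_cons_of_mem hy))
    have h' : b + u.sum = a + (Multiset.card u) • a := by
      rw [Multiset.sum_cons] at h
      rw [h, Multiset.card_cons, succ_nsmul, add_comm]
    have hba : b = a := by
      by_contra hne
      have hlt : b < a := lt_of_le_of_ne hb hne
      have : b + u.sum < a + (Multiset.card u) • a := add_lt_add_of_lt_of_le hlt hs
      exact absurd h' this.ne
    have hsum : u.sum = (Multiset.card u) • a := by
      rw [hba] at h'; exact add_left_cancel h'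
    intro y hy
    rcases Multiset.mem_cons.mp hy with rfl | hy
    · exact hba
    · exact ih (fun z hz => hle z (Multiset.mem_cons_of_mem hz)) hsum y hy

/-- Decompose a multiset of generators into exponents. -/
lemma stmt17_expts (r : ℚ≥0) (i : ℕ) (g : Multiset ℚ≥0)
    (hg : ∀ y ∈ g, y ∈ ({q : ℚ≥0 | ∃ k : ℕ, q = r ^ (2 * k)} ∪
       {q : ℚ≥0 | ∃ j : ℕ, 1 ≤ j ∧ j ≤ i ∧ q = r ^ (2 * j - 1)})) :
    ∃ t : Multiset ℕ, (∀ m ∈ t, Even m ∨ (Odd m ∧ m ≤ 2 * i - 1)) ∧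
      t.map (fun m => r ^ m) = g := by
  revert hg
  induction g using Multiset.induction with
  | empty => exact fun _ => ⟨0, by simp, by simp⟩
  | cons a g ih =>
    intro hg
    obtain ⟨t, ht, hmap⟩ := ih (fun y hy => hg y (Multiset.mem_cons_of_mem hy))
    rcases hg a (Multiset.mem_cons_self a g) with ⟨k, rfl⟩ | ⟨j, hj1, hji, rfl⟩
    · refine ⟨(2 * k) ::ₘ t, ?_, by simp [hmap]⟩
      intro m hm
      rcases Multiset.mem_cons.mp hm with rfl | hm
      · exact Or.inl ⟨k, by ring⟩
      · exact ht m hm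
    · refine ⟨(2 * j - 1) ::ₘ t, ?_, by simp [hmap]⟩
      intro m hm
      rcases Multiset.mem_cons.mp hm with rfl | hm
      · exact Or.inr ⟨⟨j - 1, by omega⟩, by omega⟩
      · exact ht m hm


lemma stmt17_coreB (r : ℚ≥0) (h1 : 1 < r) (hd2 : 2 ≤ r.den) (i : ℕ)
    (t : Multiset ℕ) (ht : ∀ m ∈ t, Even m ∨ (Odd m ∧ m ≤ 2 * i - 1))
    (hsum : (t.map (fun m => r ^ m)).sum = r ^ (2 * i + 2)) :
    Multiset.card t = 1 := by
  have hr0 : 0 < r := lt_trans zero_lt_one h1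
  have ht0 : t ≠ 0 := by
    rintro rfl
    rw [Multiset.map_zero, Multiset.sum_zero] at hsum
    exact (pow_pos hr0 (2 * i + 2)).ne' hsum.symm
  obtain ⟨M, hMmem, hMle⟩ := stmt17_exists_max t ht0
  have hMle' : M ≤ 2 * i + 2 := by
    have h1' : r ^ M ≤ r ^ (2 * i + 2) := by
      rw [← hsum]
      exact Multiset.single_le_sum (fun _ _ => zero_le) _ (Multiset.mem_map_of_mem _ hMmem)
    exact (pow_le_pow_iff_right₀ h1).mp h1'
  have hM : M = 2 * i + 2 := by
    by_contra hne
    have hM' : ∀ m ∈ t, m ≤ 2 * i + 1 := fun m hm => by have := hMle m hm; omega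
    have hnat : (t.map (fun m => r.num ^ m * r.den ^ (2 * i + 2 - m))).sum
        = r.num ^ (2 * i + 2) := by
      have e1 := stmt17_sum_map r t (2 * i + 2) (fun m hm => by have := hM' m hm; omega)
      rw [hsum] at e1
      have e2 : r ^ (2 * i + 2) * (r.den : ℚ≥0) ^ (2 * i + 2)
          = ((r.num ^ (2 * i + 2) : ℕ) : ℚ≥0) := by
        have h5 := stmt17_pow_den r (le_refl (2 * i + 2))
        rwa [Nat.sub_self, pow_zero, mul_one] at h5
      rw [e2] at e1
      exact_mod_cast e1.symm
    have hdvd : r.den ∣ r.num ^ (2 * i + 2) := by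
      rw [← hnat]
      refine Multiset.dvd_sum ?_
      intro y hy
      obtain ⟨m, hm, rfl⟩ := Multiset.mem_map.mp hy
      exact (dvd_pow_self r.den (show 2 * i + 2 - m ≠ 0 by have := hM' m hm; omega)).mul_left _
    have hcop : Nat.Coprime r.den (r.num ^ (2 * i + 2)) :=
      Nat.Coprime.pow_right _ r.coprime_num_den.symm
    have := Nat.Coprime.eq_one_of_dvd hcop hdvd
    omega
  obtain ⟨t', rfl⟩ := Multiset.exists_cons_of_mem hMmem
  rw [Multiset.map_cons, Multiset.sum_cons, hM] at hsum
  have hz : (t'.map (fun m => r ^ m)).sum = 0 := add_eq_left.mp hsum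
  have ht' : t' = 0 := by
    by_contra h0
    obtain ⟨m, hm⟩ := Multiset.exists_mem_of_ne_zero h0
    have h00 : r ^ m = 0 := by
      rw [Multiset.sum_eq_zero_iff] at hz
      exact hz _ (Multiset.mem_map_of_mem _ hm)
    exact (pow_pos hr0 m).ne' h00
  simp [ht']

lemma stmt17_coreA (r : ℚ≥0) (h1 : 1 < r) (hd2 : 2 ≤ r.den) (i : ℕ)
    (t : Multiset ℕ) (ht : ∀ m ∈ t, Even m ∨ (Odd m ∧ m ≤ 2 * i - 1))
    (hsum : (t.map (fun m => r ^ m)).sum = (r.num : ℚ≥0) ^ 2 * r ^ (2 * i))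
    (hcard : Multiset.card t ≤ r.den ^ 2) :
    t = Multiset.replicate (r.den ^ 2) (2 * i + 2) := by
  have hr0 : 0 < r := lt_trans zero_lt_one h1
  have hdn : (r.den : ℚ≥0) * r = r.num := r.den_mul_eq_num
  have hd0 : (0 : ℚ≥0) < r.den := by exact_mod_cast (by omega : 0 < r.den)
  have hdn' : (r.den : ℚ≥0) < r.num := by
    calc (r.den : ℚ≥0) = r.den * 1 := (mul_one _).symm
      _ < r.den * r := mul_lt_mul_of_pos_left h1 hd0
      _ = r.num := hdn
  have hn0 : (0 : ℚ≥0) < r.num := lt_trans hd0 hdn'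
  have hxpos : (0 : ℚ≥0) < (r.num : ℚ≥0) ^ 2 * r ^ (2 * i) :=
    mul_pos (pow_pos hn0 2) (pow_pos hr0 _)
  have ht0 : t ≠ 0 := by
    rintro rfl
    rw [Multiset.map_zero, Multiset.sum_zero] at hsum
    exact hxpos.ne' hsum.symm
  obtain ⟨M, hMmem, hMle⟩ := stmt17_exists_max t ht0
  have hxd : (r.num : ℚ≥0) ^ 2 * r ^ (2 * i) = ((r.den : ℚ≥0)) ^ 2 * r ^ (2 * i + 2) := by
    rw [← hdn]; ring
  have hub : ∀ K, (∀ m ∈ t, m ≤ K) →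
      (r.num : ℚ≥0) ^ 2 * r ^ (2 * i) ≤ (Multiset.card t) • r ^ K := by
    intro K hK
    have hbb := Multiset.sum_le_card_nsmul (t.map fun m => r ^ m) (r ^ K) (by
      intro y hy
      obtain ⟨m, hm, rfl⟩ := Multiset.mem_map.mp hy
      exact pow_le_pow_right₀ h1.le (hK m hm))
    rw [← hsum]
    simpa [Multiset.card_map] using hbb
  have hMge : 2 * i + 2 ≤ M := by
    by_contra hlt
    have hK : ∀ m ∈ t, m ≤ 2 * i + 1 := fun m hm => by have := hMle m hm; omega
    have h2 := hub (2 * i + 1) hK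
    rw [nsmul_eq_mul] at h2
    have h3 : (Multiset.card t : ℚ≥0) * r ^ (2 * i + 1)
        ≤ ((r.den : ℚ≥0)) ^ 2 * r ^ (2 * i + 1) := by
      refine mul_le_mul_of_nonneg_right ?_ zero_le
      exact_mod_cast hcard
    have h4 : ((r.den : ℚ≥0)) ^ 2 * r ^ (2 * i + 1) < (r.num : ℚ≥0) ^ 2 * r ^ (2 * i) := by
      have e : ((r.den : ℚ≥0)) ^ 2 * r ^ (2 * i + 1)
          = (r.den : ℚ≥0) * (r.num : ℚ≥0) * r ^ (2 * i) := by
        rw [← hdn]; ring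
      rw [e]
      calc (r.den : ℚ≥0) * (r.num : ℚ≥0) * r ^ (2 * i)
          < (r.num : ℚ≥0) * (r.num : ℚ≥0) * r ^ (2 * i) :=
            mul_lt_mul_of_pos_right (mul_lt_mul_of_pos_right hdn' hn0) (pow_pos hr0 _)
        _ = (r.num : ℚ≥0) ^ 2 * r ^ (2 * i) := by ring
    exact absurd (le_trans h2 h3) (not_le.mpr h4)
  have hME : M = 2 * i + 2 ∨ 2 * i + 4 ≤ M := by
    rcases ht M hMmem with ⟨k, hk⟩ | ⟨⟨k, hk⟩, hkle⟩
    · omega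
    · omega
  rcases hME with hM | hM
  · -- M = 2i+2 : conclude equality
    have hK : ∀ m ∈ t, m ≤ 2 * i + 2 := fun m hm => by have := hMle m hm; omega
    have h2 := hub (2 * i + 2) hK
    rw [nsmul_eq_mul] at h2
    have h3 : (Multiset.card t : ℚ≥0) * r ^ (2 * i + 2)
        ≤ ((r.den : ℚ≥0)) ^ 2 * r ^ (2 * i + 2) := by
      refine mul_le_mul_of_nonneg_right ?_ zero_le
      exact_mod_cast hcard
    have heq1 : (Multiset.card t : ℚ≥0) * r ^ (2 * i + 2)
        = ((r.den : ℚ≥0)) ^ 2 * r ^ (2 * i + 2) :=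
      le_antisymm h3 (by rw [← hxd]; exact h2)
    have hcardeq : Multiset.card t = r.den ^ 2 := by
      have hpow0 : r ^ (2 * i + 2) ≠ 0 := (pow_pos hr0 _).ne'
      have hcc := mul_right_cancel₀ hpow0 heq1
      exact_mod_cast hcc
    have hs_eq : (t.map fun m => r ^ m).sum
        = (Multiset.card (t.map fun m => r ^ m)) • r ^ (2 * i + 2) := by
      rw [Multiset.card_map, nsmul_eq_mul, hsum, hxd, hcardeq]
      push_cast
      ring
    have hall := stmt17_all_eq_of_sum _ _ (fun y hy => by
      obtain ⟨m, hm, rfl⟩ := Multiset.mem_map.mp hy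
      exact pow_le_pow_right₀ h1.le (hK m hm)) hs_eq
    refine Multiset.eq_replicate.mpr ⟨hcardeq, ?_⟩
    intro b hb
    have hbe : r ^ b = r ^ (2 * i + 2) := hall _ (Multiset.mem_map_of_mem _ hb)
    exact (pow_right_strictMono₀ h1).injective hbe
  · -- M ≥ 2i+4 : contradiction
    exfalso
    have hMev : Even M := by
      rcases ht M hMmem with he | ⟨⟨k, hk⟩, hkle⟩
      · exact he
      · omega
    have hnat : (t.map (fun m => r.num ^ m * r.den ^ (M - m))).sum
        = r.num ^ (2 * i + 2) * r.den ^ (M - 2 * i) := by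
      have e1 := stmt17_sum_map r t M hMle
      rw [hsum] at e1
      have e2 : (r.num : ℚ≥0) ^ 2 * r ^ (2 * i) * (r.den : ℚ≥0) ^ M
          = ((r.num ^ (2 * i + 2) * r.den ^ (M - 2 * i) : ℕ) : ℚ≥0) := by
        have h5 := stmt17_pow_den r (show 2 * i ≤ M by omega)
        push_cast at h5 ⊢
        rw [mul_assoc, h5]
        ring
      rw [e2] at e1
      exact_mod_cast e1.symm
    set c := t.count M with hc
    have hcpos : 0 < c := Multiset.count_pos.mpr hMmem
    have hsplit : t = Multiset.replicate c M + t.filter (fun m => ¬ m = M) := by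
      conv_lhs => rw [← Multiset.filter_add_not (fun m => m = M) t]
      rw [Multiset.filter_eq']
    set S := ((t.filter (fun m => ¬ m = M)).map (fun m => r.num ^ m * r.den ^ (M - m))).sum
      with hS_def
    have hS : (r.den ^ 2 : ℕ) ∣ S := by
      refine Multiset.dvd_sum ?_
      intro y hy
      obtain ⟨m, hm, rfl⟩ := Multiset.mem_map.mp hy
      have hm' := Multiset.mem_filter.mp hm
      have hle2 : m ≤ M - 2 := by
        obtain ⟨K2, hK2⟩ := hMev
        rcases ht m hm'.1 with ⟨k, hk⟩ | ⟨⟨k, hk⟩, hkle⟩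
        · have h6 := hMle m hm'.1
          have h7 := hm'.2
          omega
        · omega
      exact (pow_dvd_pow r.den (by omega : 2 ≤ M - m)).mul_left _
    have hR : (r.den ^ 2 : ℕ) ∣ r.num ^ (2 * i + 2) * r.den ^ (M - 2 * i) :=
      (pow_dvd_pow r.den (by omega : 2 ≤ M - 2 * i)).mul_left _
    have hEq : S + c * r.num ^ M = r.num ^ (2 * i + 2) * r.den ^ (M - 2 * i) := by
      rw [← hnat]
      conv_rhs => rw [hsplit]
      rw [Multiset.map_add, Multiset.sum_add, Multiset.map_replicate,
        Multiset.sum_replicate, Nat.sub_self, pow_zero, mul_one, smul_eq_mul]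
      exact add_comm _ _
    have hdvd2 : (r.den ^ 2 : ℕ) ∣ c * r.num ^ M :=
      (Nat.dvd_add_right hS).mp (by rw [hEq]; exact hR)
    have hcd : r.den ^ 2 ∣ c :=
      (Nat.Coprime.pow 2 M r.coprime_num_den.symm).dvd_of_dvd_mul_right hdvd2
    have hcge : r.den ^ 2 ≤ c := Nat.le_of_dvd hcpos hcd
    have hge : (c : ℚ≥0) * r ^ M ≤ (t.map fun m => r ^ m).sum := by
      conv_rhs => rw [hsplit]
      rw [Multiset.map_add, Multiset.sum_add, Multiset.map_replicate,
        Multiset.sum_replicate, nsmul_eq_mul]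
      exact le_self_add
    have hlt : (r.num : ℚ≥0) ^ 2 * r ^ (2 * i) < (c : ℚ≥0) * r ^ M := by
      calc (r.num : ℚ≥0) ^ 2 * r ^ (2 * i) = ((r.den : ℚ≥0)) ^ 2 * r ^ (2 * i + 2) := hxd
        _ < ((r.den : ℚ≥0)) ^ 2 * r ^ (2 * i + 4) :=
            mul_lt_mul_of_pos_left (pow_lt_pow_right₀ h1 (by omega)) (pow_pos hd0 2)
        _ ≤ ((r.den : ℚ≥0)) ^ 2 * r ^ M :=
            mul_le_mul_of_nonneg_left (pow_le_pow_right₀ h1.le hM) zero_le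
        _ ≤ (c : ℚ≥0) * r ^ M := by
            refine mul_le_mul_of_nonneg_right ?_ zero_le
            exact_mod_cast hcge
    rw [hsum] at hge
    exact absurd hge (not_le.mpr hlt)

end AuxStmt17

theorem stmt17 (r : ℚ≥0) (h1 : 1 < r) (hn : ∀ n : ℕ, r ≠ (n : ℚ≥0))
    (i : ℕ) (hi : 1 ≤ i)
    (Mi : AddSubmonoid ℚ≥0)
    (hMi : Mi = AddSubmonoid.closure
      ({q : ℚ≥0 | ∃ k : ℕ, q = r ^ (2 * k)} ∪
       {q : ℚ≥0 | ∃ j : ℕ, 1 ≤ j ∧ j ≤ i ∧ q = r ^ (2 * j - 1)}))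
    (x : ℚ≥0) (hx : x = (r.num : ℚ≥0) ^ 2 * r ^ (2 * i)) :
    Multiset.replicate (r.den ^ 2) (r ^ (2 * i + 2)) ∈ PMfactorizations Mi x ∧
    ∀ s ∈ PMfactorizations Mi x,
      s.card ≤ (Multiset.replicate (r.den ^ 2) (r ^ (2 * i + 2))).card →
        s = Multiset.replicate (r.den ^ 2) (r ^ (2 * i + 2)) := by
  set G : Set ℚ≥0 := ({q : ℚ≥0 | ∃ k : ℕ, q = r ^ (2 * k)} ∪
       {q : ℚ≥0 | ∃ j : ℕ, 1 ≤ j ∧ j ≤ i ∧ q = r ^ (2 * j - 1)}) with hG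
  have hd2 : 2 ≤ r.den := by
    by_contra h
    have hd1 : r.den = 1 := by have := r.den_ne_zero; omega
    have : r = (r.num : ℚ≥0) := by rw [← r.den_mul_eq_num, hd1]; simp
    exact hn r.num this
  have hr0 : 0 < r := lt_trans zero_lt_one h1
  have hdn : (r.den : ℚ≥0) * r = r.num := r.den_mul_eq_num
  have hgen_mem : ∀ q ∈ G, q ∈ Mi := fun q hq => hMi ▸ AddSubmonoid.subset_closure hq
  have hgen_pos : ∀ q ∈ G, q ≠ 0 := by
    rintro q (⟨k, rfl⟩ | ⟨j, hj1, hji, rfl⟩) <;> exact (pow_pos hr0 _).ne'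
  have hatom_sub : ∀ a ∈ PMatoms Mi, a ∈ G := by
    intro a ha
    obtain ⟨haM, ha0, hairr⟩ := ha
    have haM' : a ∈ AddSubmonoid.closure G := hMi ▸ haM
    obtain ⟨g, hgmem, hgsum⟩ := AddSubmonoid.exists_multiset_of_mem_closure haM'
    have hg0 : g ≠ 0 := by
      rintro rfl
      rw [Multiset.sum_zero] at hgsum
      exact ha0 hgsum.symm
    obtain ⟨b, hbmem⟩ := Multiset.exists_mem_of_ne_zero hg0
    obtain ⟨g', rfl⟩ := Multiset.exists_cons_of_mem hbmem
    by_cases hg' : g' = 0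
    · subst hg'
      rw [Multiset.sum_cons, Multiset.sum_zero, add_zero] at hgsum
      exact hgsum ▸ hgmem b (Multiset.mem_cons_self b 0)
    · exfalso
      rw [Multiset.sum_cons] at hgsum
      obtain ⟨c, hcmem⟩ := Multiset.exists_mem_of_ne_zero hg'
      have hcpos : c ≠ 0 := hgen_pos c (hgmem c (Multiset.mem_cons_of_mem hcmem))
      have hsum0 : g'.sum ≠ 0 := by
        intro h0
        rw [Multiset.sum_eq_zero_iff] at h0
        exact hcpos (h0 c hcmem)
      exact hairr b (hgen_mem b (hgmem b (Multiset.mem_cons_self b g')))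
        g'.sum (AddSubmonoid.multiset_sum_mem Mi g'
          (fun q hq => hgen_mem q (hgmem q (Multiset.mem_cons_of_mem hq))))
        (hgen_pos b (hgmem b (Multiset.mem_cons_self b g'))) hsum0 hgsum.symm
  have hatom : r ^ (2 * i + 2) ∈ PMatoms Mi := by
    refine ⟨hgen_mem _ (Or.inl ⟨i + 1, by ring_nf⟩), (pow_pos hr0 _).ne', ?_⟩
    intro y hy z hz hy0 hz0 heq
    have hy' : y ∈ AddSubmonoid.closure G := hMi ▸ hy
    have hz' : z ∈ AddSubmonoid.closure G := hMi ▸ hz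
    obtain ⟨gy, hgy, hgysum⟩ := AddSubmonoid.exists_multiset_of_mem_closure hy'
    obtain ⟨gz, hgz, hgzsum⟩ := AddSubmonoid.exists_multiset_of_mem_closure hz'
    obtain ⟨t, htE, htmap⟩ := stmt17_expts r i (gy + gz) (by
      intro q hq
      rcases Multiset.mem_add.mp hq with h | h
      exacts [hgy q h, hgz q h])
    have hsum : (t.map fun m => r ^ m).sum = r ^ (2 * i + 2) := by
      rw [htmap, Multiset.sum_add, hgysum, hgzsum]
      exact heq.symm
    have hcard1 := stmt17_coreB r h1 hd2 i t htE hsum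
    have hgy0 : gy ≠ 0 := by
      rintro rfl
      rw [Multiset.sum_zero] at hgysum
      exact hy0 hgysum.symm
    have hgz0 : gz ≠ 0 := by
      rintro rfl
      rw [Multiset.sum_zero] at hgzsum
      exact hz0 hgzsum.symm
    have hct : Multiset.card t = Multiset.card gy + Multiset.card gz := by
      rw [← Multiset.card_map (fun m => r ^ m) t, htmap, Multiset.card_add]
    have h1y : 0 < Multiset.card gy := Multiset.card_pos.mpr hgy0
    have h1z : 0 < Multiset.card gz := Multiset.card_pos.mpr hgz0
    omega
  constructor
  · refine ⟨?_, ?_⟩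
    · intro a ha
      have haa : a = r ^ (2 * i + 2) := Multiset.eq_of_mem_replicate ha
      rw [haa]; exact hatom
    · rw [Multiset.sum_replicate, nsmul_eq_mul, hx]
      push_cast
      rw [← hdn]; ring
  · intro s hs hcards
    obtain ⟨hsatoms, hssum⟩ := hs
    obtain ⟨t, htE, htmap⟩ := stmt17_expts r i s (fun y hy => hatom_sub y (hsatoms y hy))
    have hsum : (t.map fun m => r ^ m).sum = (r.num : ℚ≥0) ^ 2 * r ^ (2 * i) := by
      rw [htmap, hssum, hx]
    have hcard : Multiset.card t ≤ r.den ^ 2 := by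
      rw [← Multiset.card_map (fun m => r ^ m) t, htmap]
      simpa using hcards
    have hrep := stmt17_coreA r h1 hd2 i t htE hsum hcard
    rw [← htmap, hrep, Multiset.map_replicate]
end

section
/- Every atomic Puiseux monoid M admits a numerical approximation: there is a sequence (N_i)_{i≥1} of finitely generated atomic submonoids of M with N_i ⊆ N_{i+1}, A(N_i) ⊆ A(N_{i+1}), and M = ∪_{i≥1} N_i, where each N_i is isomorphic to a numerical monoid (or finite cyclic generation) when M is nontrivial. (It suffices to show: if a₁, a₂, … enumerates A(M), then N_i := ⟨a₁, …, a_i⟩ satisfies A(N_i) ⊆ A(N_{i+1}) and ∪ N_i = M.) -/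
open scoped NNRat ENNReal

lemma atom_of_le {M N : AddSubmonoid ℚ≥0} (h : N ≤ M) {x : ℚ≥0}
    (hx : x ∈ PMatoms M) (hxN : x ∈ N) : x ∈ PMatoms N :=
  ⟨hxN, hx.2.1, fun y hy z hz hy0 hz0 => hx.2.2 y (h hy) z (h hz) hy0 hz0⟩

lemma atoms_closure_subset {M : AddSubmonoid ℚ≥0} {S : Set ℚ≥0} (hS : S ⊆ PMatoms M) :
    PMatoms (AddSubmonoid.closure S) ⊆ S := by
  intro x hx
  obtain ⟨l, hl, hsum⟩ := AddSubmonoid.exists_multiset_of_mem_closure hx.1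
  have hne : ∀ y ∈ l, y ≠ 0 := fun y hy => (hS (hl y hy)).2.1
  rcases l.empty_or_exists_mem with h0 | ⟨y, hy⟩
  · exact absurd (show x = 0 by subst h0; simpa using hsum.symm) hx.2.1
  obtain ⟨t, rfl⟩ := Multiset.exists_cons_of_mem hy
  rcases t.empty_or_exists_mem with h0 | ⟨z, hz⟩
  · subst h0
    have hyx : y = x := by simpa using hsum
    exact hyx ▸ hl y hy
  · exfalso
    have hyS := hl y (Multiset.mem_cons_self y t)
    have htsum : t.sum ∈ AddSubmonoid.closure S :=
      AddSubmonoid.multiset_sum_mem _ t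
        (fun z hz => AddSubmonoid.subset_closure (hl z (Multiset.mem_cons_of_mem hz)))
    have ht0 : t.sum ≠ 0 := by
      intro h
      exact hne z (Multiset.mem_cons_of_mem hz) (Multiset.sum_eq_zero_iff.mp h z hz)
    exact hx.2.2 y (AddSubmonoid.subset_closure hyS) t.sum htsum
      (hne y (Multiset.mem_cons_self y t)) ht0
      (by rw [← hsum, Multiset.sum_cons])

theorem stmt19 (M : AddSubmonoid ℚ≥0) (hM : PMatomic M)
    (a : ℕ → ℚ≥0) (ha : Set.range a = PMatoms M) :
    PMapprox M (fun i => AddSubmonoid.closure (a '' Set.Iic i)) := by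
  have haM : ∀ j : ℕ, a j ∈ PMatoms M := fun j => ha ▸ Set.mem_range_self j
  have hsub : ∀ i : ℕ, a '' Set.Iic i ⊆ PMatoms M := fun i x ⟨j, _, hj⟩ => hj ▸ haM j
  have hle : ∀ i, AddSubmonoid.closure (a '' Set.Iic i) ≤ M := fun i =>
    AddSubmonoid.closure_le.mpr (fun x hx => (hsub i hx).1)
  have hmono : ∀ i, AddSubmonoid.closure (a '' Set.Iic i) ≤
      AddSubmonoid.closure (a '' Set.Iic (i + 1)) := fun i =>
    AddSubmonoid.closure_mono (Set.image_mono (f := a) (Set.Iic_subset_Iic.mpr (Nat.le_succ i)))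
  have hgen_atom : ∀ i : ℕ, a '' Set.Iic i ⊆ PMatoms (AddSubmonoid.closure (a '' Set.Iic i)) :=
    fun i x hx => atom_of_le (hle i) (hsub i hx) (AddSubmonoid.subset_closure hx)
  refine ⟨hmono, ?_, ?_, ?_⟩
  · intro i x hx
    exact AddSubmonoid.closure_mono (hgen_atom i) hx
  · intro i x hx
    have hxS : x ∈ a '' Set.Iic i := atoms_closure_subset (hsub i) hx
    exact atom_of_le (hle (i + 1)) (hsub i hxS)
      (hmono i (AddSubmonoid.subset_closure hxS))
  · intro x
    constructor
    · intro hx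
      have := hM x hx
      rw [← ha] at this
      have hr : Set.range a = ⋃ i : ℕ, a '' Set.Iic i := by
        ext y
        simp only [Set.mem_range, Set.mem_iUnion, Set.mem_image, Set.mem_Iic]
        exact ⟨fun ⟨j, hj⟩ => ⟨j, j, le_refl j, hj⟩, fun ⟨i, j, _, hj⟩ => ⟨j, hj⟩⟩
      rw [hr, AddSubmonoid.closure_iUnion] at this
      have hdir : Directed (· ≤ ·) (fun i => AddSubmonoid.closure (a '' Set.Iic i)) := by
        intro i j
        exact ⟨max i j,
          AddSubmonoid.closure_mono (Set.image_mono (f := a) (Set.Iic_subset_Iic.mpr (le_max_left i j))),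
          AddSubmonoid.closure_mono (Set.image_mono (f := a) (Set.Iic_subset_Iic.mpr (le_max_right i j)))⟩
      exact (AddSubmonoid.mem_iSup_of_directed hdir).mp this
    · rintro ⟨i, hx⟩
      exact hle i hx
end
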